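/- Structure recognition decomposition: let A be an m×n real matrix with singular value decomposition A = Σ z_i y_i x_iᵀ. Suppose for the top k singular triples there are orthonormal vectors v₁,...,v_k ∈ ℝ^m and u₁,...,u_k ∈ ℝ^n with Σ_{i=1}^k ‖y_i − v_i‖² ≤ ρ² and Σ_{i=1}^k ‖x_i − u_i‖² ≤ ρ². Set B = Σ_{i=1}^k z_i v_i u_iᵀ. Then ‖A − B‖ ≤ z_{k+1} + z₁·(2ρ + ρ²), where z₁ ≥ ... are the singular values of A (z_{k+1} := 0 if k = min(m,n)). -/

import Mathlib

noncomputable def euclNorm {m : ℕ} (v : Fin m → ℝ) : ℝ := Real.sqrt (∑ i, v i ^ 2)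

noncomputable def specNorm {m n : ℕ} (A : Matrix (Fin m) (Fin n) ℝ) : ℝ :=
  ‖(LinearMap.toContinuousLinearMap (Matrix.toEuclideanLin A))‖

open scoped RealInnerProductSpace Matrix

namespace Stmt17Aux

section Bounds

variable {E F : Type*} [NormedAddCommGroup E] [InnerProductSpace ℝ E]
  [NormedAddCommGroup F] [InnerProductSpace ℝ F] {ι : Type*}

lemma norm_sum_sq {f : ι → E} (hf : Orthonormal ℝ f) (t : ι → ℝ) (s : Finset ι) :
    ‖∑ i ∈ s, t i • f i‖ ^ 2 = ∑ i ∈ s, t i ^ 2 := by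
  rw [← real_inner_self_eq_norm_sq, hf.inner_sum]
  simp [sq]

lemma bessel_real {g : ι → F} (hg : Orthonormal ℝ g) (s : Finset ι) (w : F) :
    ∑ i ∈ s, ⟪g i, w⟫ ^ 2 ≤ ‖w‖ ^ 2 := by
  have := hg.sum_inner_products_le (s := s) (x := w)
  simpa [Real.norm_eq_abs, sq_abs] using this

lemma bound1 (s : Finset ι) (c : ι → ℝ) (f : ι → E) (g : ι → F)
    (hf : Orthonormal ℝ f) (hg : Orthonormal ℝ g)
    {C : ℝ} (hC : 0 ≤ C) (hc : ∀ i ∈ s, |c i| ≤ C) (w : F) :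
    ‖∑ i ∈ s, (c i * ⟪g i, w⟫) • f i‖ ≤ C * ‖w‖ := by
  have h0 : 0 ≤ C * ‖w‖ := by positivity
  rw [← Real.sqrt_sq (norm_nonneg _), ← Real.sqrt_sq h0]
  apply Real.sqrt_le_sqrt
  rw [norm_sum_sq hf, mul_pow]
  calc ∑ i ∈ s, (c i * ⟪g i, w⟫) ^ 2 ≤ ∑ i ∈ s, C ^ 2 * ⟪g i, w⟫ ^ 2 := by
        refine Finset.sum_le_sum fun i hi => ?_
        rw [mul_pow]
        have : c i ^ 2 ≤ C ^ 2 := by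
          rw [← sq_abs (c i)]
          exact pow_le_pow_left₀ (abs_nonneg _) (hc i hi) 2
        exact mul_le_mul_of_nonneg_right this (sq_nonneg _)
    _ = C ^ 2 * ∑ i ∈ s, ⟪g i, w⟫ ^ 2 := by rw [Finset.mul_sum]
    _ ≤ C ^ 2 * ‖w‖ ^ 2 :=
        mul_le_mul_of_nonneg_left (bessel_real hg s w) (sq_nonneg _)

lemma bound2 (s : Finset ι) (c : ι → ℝ) (f : ι → E) (g : ι → F)
    (hf : Orthonormal ℝ f)
    {C ρ : ℝ} (hC : 0 ≤ C) (hρ : 0 ≤ ρ) (hc : ∀ i ∈ s, |c i| ≤ C)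
    (hg : ∑ i ∈ s, ‖g i‖ ^ 2 ≤ ρ ^ 2) (w : F) :
    ‖∑ i ∈ s, (c i * ⟪g i, w⟫) • f i‖ ≤ C * ρ * ‖w‖ := by
  have h0 : 0 ≤ C * ρ * ‖w‖ := by positivity
  rw [← Real.sqrt_sq (norm_nonneg _), ← Real.sqrt_sq h0]
  apply Real.sqrt_le_sqrt
  rw [norm_sum_sq hf, mul_pow, mul_pow]
  calc ∑ i ∈ s, (c i * ⟪g i, w⟫) ^ 2
      ≤ ∑ i ∈ s, C ^ 2 * (‖g i‖ ^ 2 * ‖w‖ ^ 2) := by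
        refine Finset.sum_le_sum fun i hi => ?_
        rw [mul_pow]
        have h1 : c i ^ 2 ≤ C ^ 2 := by
          rw [← sq_abs (c i)]
          exact pow_le_pow_left₀ (abs_nonneg _) (hc i hi) 2
        have h2 : ⟪g i, w⟫ ^ 2 ≤ ‖g i‖ ^ 2 * ‖w‖ ^ 2 := by
          rw [← mul_pow, ← sq_abs (⟪g i, w⟫)]
          exact pow_le_pow_left₀ (abs_nonneg _) (abs_real_inner_le_norm _ _) 2
        exact mul_le_mul h1 h2 (sq_nonneg _) (sq_nonneg _)
    _ = C ^ 2 * ((∑ i ∈ s, ‖g i‖ ^ 2) * ‖w‖ ^ 2) := by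
        rw [← Finset.mul_sum, ← Finset.sum_mul]
    _ ≤ C ^ 2 * (ρ ^ 2 * ‖w‖ ^ 2) := by
        have := mul_le_mul_of_nonneg_right hg (sq_nonneg ‖w‖)
        exact mul_le_mul_of_nonneg_left this (sq_nonneg _)
    _ = C ^ 2 * ρ ^ 2 * ‖w‖ ^ 2 := by ring

lemma bound3 (s : Finset ι) (c : ι → ℝ) (f : ι → E) (g : ι → F)
    (hg : Orthonormal ℝ g)
    {C ρ : ℝ} (hC : 0 ≤ C) (hρ : 0 ≤ ρ) (hc : ∀ i ∈ s, |c i| ≤ C)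
    (hf : ∑ i ∈ s, ‖f i‖ ^ 2 ≤ ρ ^ 2) (w : F) :
    ‖∑ i ∈ s, (c i * ⟪g i, w⟫) • f i‖ ≤ C * ρ * ‖w‖ := by
  calc ‖∑ i ∈ s, (c i * ⟪g i, w⟫) • f i‖
      ≤ ∑ i ∈ s, ‖(c i * ⟪g i, w⟫) • f i‖ := norm_sum_le _ _
    _ = ∑ i ∈ s, |c i| * (|⟪g i, w⟫| * ‖f i‖) := by
        refine Finset.sum_congr rfl fun i _ => ?_
        rw [norm_smul, Real.norm_eq_abs, abs_mul, mul_assoc]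
    _ ≤ ∑ i ∈ s, C * (|⟪g i, w⟫| * ‖f i‖) := by
        refine Finset.sum_le_sum fun i hi => ?_
        exact mul_le_mul_of_nonneg_right (hc i hi) (by positivity)
    _ = C * ∑ i ∈ s, |⟪g i, w⟫| * ‖f i‖ := by rw [Finset.mul_sum]
    _ ≤ C * (‖w‖ * ρ) := by
        refine mul_le_mul_of_nonneg_left ?_ hC
        have key : (∑ i ∈ s, |⟪g i, w⟫| * ‖f i‖) ^ 2 ≤
            (∑ i ∈ s, |⟪g i, w⟫| ^ 2) * ∑ i ∈ s, ‖f i‖ ^ 2 :=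
          Finset.sum_mul_sq_le_sq_mul_sq s _ _
        have h1 : ∑ i ∈ s, |⟪g i, w⟫| ^ 2 ≤ ‖w‖ ^ 2 := by
          simpa [sq_abs] using bessel_real hg s w
        have h2 : (∑ i ∈ s, |⟪g i, w⟫| * ‖f i‖) ^ 2 ≤ ‖w‖ ^ 2 * ρ ^ 2 := by
          refine key.trans ?_
          exact mul_le_mul h1 hf (Finset.sum_nonneg fun i _ => sq_nonneg _) (sq_nonneg _)
        have hnn0 : 0 ≤ ∑ i ∈ s, |⟪g i, w⟫| * ‖f i‖ :=
          Finset.sum_nonneg fun i _ => by positivity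
        calc ∑ i ∈ s, |⟪g i, w⟫| * ‖f i‖
            = Real.sqrt ((∑ i ∈ s, |⟪g i, w⟫| * ‖f i‖) ^ 2) := (Real.sqrt_sq hnn0).symm
          _ ≤ Real.sqrt (‖w‖ ^ 2 * ρ ^ 2) := Real.sqrt_le_sqrt h2
          _ = ‖w‖ * ρ := by rw [← mul_pow, Real.sqrt_sq (by positivity)]
    _ = C * ρ * ‖w‖ := by ring

end Bounds

noncomputable def toE {m : ℕ} (w : Fin m → ℝ) : EuclideanSpace ℝ (Fin m) :=
  (WithLp.equiv 2 _).symm w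

lemma toE_apply {m : ℕ} (w : Fin m → ℝ) (i : Fin m) : toE w i = w i := rfl

lemma euclNorm_eq {m : ℕ} (w : Fin m → ℝ) : euclNorm w = ‖toE w‖ := by
  rw [EuclideanSpace.norm_eq, euclNorm]
  congr 1
  refine Finset.sum_congr rfl fun i _ => ?_
  rw [toE_apply, Real.norm_eq_abs, sq_abs]

lemma inner_toE {m : ℕ} (a b : Fin m → ℝ) : ⟪toE a, toE b⟫ = ∑ p, a p * b p := by
  simp [toE, PiLp.inner_apply, RCLike.inner_apply]
  exact Finset.sum_congr rfl fun _ _ => mul_comm _ _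

lemma orthonormal_of_sums {m : ℕ} {ι : Type*} [DecidableEq ι] (f : ι → Fin m → ℝ)
    (h : ∀ i j, ∑ p, f i p * f j p = if i = j then (1:ℝ) else 0) :
    Orthonormal ℝ (fun i => toE (f i)) := by
  rw [orthonormal_iff_ite]
  intro i j
  rw [inner_toE, h]

lemma mulVec_sum_vecMulVec {m n : ℕ} {ι : Type*} (s : Finset ι) (c : ι → ℝ)
    (a : ι → Fin m → ℝ) (b : ι → Fin n → ℝ) (w : Fin n → ℝ) :
    (∑ i ∈ s, c i • Matrix.vecMulVec (a i) (b i)) *ᵥ w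
      = ∑ i ∈ s, (c i * ∑ q, b i q * w q) • a i := by
  ext p
  simp only [Matrix.mulVec, dotProduct, Finset.sum_apply, Pi.smul_apply,
    Matrix.sum_apply, Matrix.smul_apply, Matrix.vecMulVec_apply, smul_eq_mul,
    Finset.sum_mul, Finset.mul_sum]
  rw [Finset.sum_comm]
  exact Finset.sum_congr rfl fun i _ => Finset.sum_congr rfl fun q _ => by ring

lemma toE_mulVec_sum {m n : ℕ} {ι : Type*} (s : Finset ι) (c : ι → ℝ)
    (a : ι → Fin m → ℝ) (b : ι → Fin n → ℝ) (w : Fin n → ℝ) :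
    toE ((∑ i ∈ s, c i • Matrix.vecMulVec (a i) (b i)) *ᵥ w)
      = ∑ i ∈ s, (c i * ⟪toE (b i), toE w⟫) • toE (a i) := by
  rw [mulVec_sum_vecMulVec]
  rw [show toE (∑ i ∈ s, (c i * ∑ q, b i q * w q) • a i)
        = ∑ i ∈ s, (c i * ∑ q, b i q * w q) • toE (a i) from by ext j; simp [toE]]
  exact Finset.sum_congr rfl fun i _ => by rw [inner_toE]

lemma specNorm_le_bound {m n : ℕ} (M : Matrix (Fin m) (Fin n) ℝ) {C : ℝ} (hC : 0 ≤ C)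
    (h : ∀ w : Fin n → ℝ, ‖toE (M *ᵥ w)‖ ≤ C * ‖toE w‖) : specNorm M ≤ C := by
  apply ContinuousLinearMap.opNorm_le_bound _ hC
  intro w
  exact h ((WithLp.equiv 2 _) w)

lemma specNorm_add_le {m n : ℕ} (M N : Matrix (Fin m) (Fin n) ℝ) :
    specNorm (M + N) ≤ specNorm M + specNorm N := by
  unfold specNorm
  rw [map_add, map_add]
  exact norm_add_le _ _

lemma specNorm_zero {m n : ℕ} : specNorm (0 : Matrix (Fin m) (Fin n) ℝ) = 0 := by
  unfold specNorm
  rw [map_zero, map_zero, norm_zero]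

end Stmt17Aux

set_option maxHeartbeats 1000000 in
open Stmt17Aux in
theorem stmt17 {m n k : ℕ} (A : Matrix (Fin m) (Fin n) ℝ)
    (hp : 0 < min m n) (hk : k ≤ min m n)
    (z : Fin (min m n) → ℝ)
    (y : Fin (min m n) → Fin m → ℝ) (x : Fin (min m n) → Fin n → ℝ)
    (hy : ∀ i j, ∑ p, y i p * y j p = if i = j then (1:ℝ) else 0)
    (hx : ∀ i j, ∑ p, x i p * x j p = if i = j then (1:ℝ) else 0)
    (hz0 : ∀ i, 0 ≤ z i) (hzm : ∀ i j, i ≤ j → z j ≤ z i)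
    (hA : A = ∑ i, z i • Matrix.vecMulVec (y i) (x i))
    (ρ : ℝ) (hρ : 0 ≤ ρ)
    (v : Fin k → Fin m → ℝ) (u : Fin k → Fin n → ℝ)
    (hv : ∀ i j, ∑ p, v i p * v j p = if i = j then (1:ℝ) else 0)
    (hu : ∀ i j, ∑ p, u i p * u j p = if i = j then (1:ℝ) else 0)
    (hyv : ∑ i, euclNorm (y (Fin.castLE hk i) - v i) ^ 2 ≤ ρ ^ 2)
    (hxu : ∑ i, euclNorm (x (Fin.castLE hk i) - u i) ^ 2 ≤ ρ ^ 2) :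
    specNorm (A - ∑ i : Fin k, z (Fin.castLE hk i) • Matrix.vecMulVec (v i) (u i)) ≤
      (if h : k < min m n then z ⟨k, h⟩ else 0) + z ⟨0, hp⟩ * (2 * ρ + ρ ^ 2) := by
  classical
  have hκinj : Function.Injective (Fin.castLE hk) := Fin.castLE_injective hk
  let B : Matrix (Fin m) (Fin n) ℝ :=
    ∑ i : Fin k, z (Fin.castLE hk i) • Matrix.vecMulVec (v i) (u i)
  let T : Matrix (Fin m) (Fin n) ℝ :=
    ∑ i ∈ Finset.univ.filter (fun i : Fin (min m n) => ¬ (i : ℕ) < k),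
      z i • Matrix.vecMulVec (y i) (x i)
  let E1 : Matrix (Fin m) (Fin n) ℝ :=
    ∑ i : Fin k, z (Fin.castLE hk i) •
      Matrix.vecMulVec (y (Fin.castLE hk i) - v i) (x (Fin.castLE hk i))
  let E2 : Matrix (Fin m) (Fin n) ℝ :=
    ∑ i : Fin k, z (Fin.castLE hk i) •
      Matrix.vecMulVec (v i) (x (Fin.castLE hk i) - u i)
  have hfilter : Finset.univ.filter (fun i : Fin (min m n) => (i : ℕ) < k)
      = Finset.univ.map (Fin.castLEEmb hk) := by
    ext j
    simp only [Finset.mem_filter, Finset.mem_univ, true_and, Finset.mem_map,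
      Fin.castLEEmb_apply, exists_true_left]
    constructor
    · intro hj
      exact ⟨⟨(j : ℕ), hj⟩, rfl⟩
    · rintro ⟨i, rfl⟩
      exact i.isLt
  have hdecomp : A - B = T + (E1 + E2) := by
    have hsplit : A = (∑ i : Fin k, z (Fin.castLE hk i) •
        Matrix.vecMulVec (y (Fin.castLE hk i)) (x (Fin.castLE hk i))) + T := by
      rw [hA, ← Finset.sum_filter_add_sum_filter_not Finset.univ
        (fun i : Fin (min m n) => (i : ℕ) < k), hfilter, Finset.sum_map]
      simp only [Fin.castLEEmb_apply]
      rfl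
    have hSB : (∑ i : Fin k, z (Fin.castLE hk i) •
        Matrix.vecMulVec (y (Fin.castLE hk i)) (x (Fin.castLE hk i))) - B = E1 + E2 := by
      show _ = E1 + E2
      rw [show E1 + E2 = ∑ i : Fin k, (z (Fin.castLE hk i) •
          Matrix.vecMulVec (y (Fin.castLE hk i) - v i) (x (Fin.castLE hk i)) +
          z (Fin.castLE hk i) •
          Matrix.vecMulVec (v i) (x (Fin.castLE hk i) - u i)) from
        (Finset.sum_add_distrib).symm]
      rw [show ((∑ i : Fin k, z (Fin.castLE hk i) •
          Matrix.vecMulVec (y (Fin.castLE hk i)) (x (Fin.castLE hk i))) - B)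
          = ∑ i : Fin k, (z (Fin.castLE hk i) •
          Matrix.vecMulVec (y (Fin.castLE hk i)) (x (Fin.castLE hk i)) -
          z (Fin.castLE hk i) • Matrix.vecMulVec (v i) (u i)) from
        (Finset.sum_sub_distrib _ _).symm]
      refine Finset.sum_congr rfl fun i _ => ?_
      ext p q
      simp only [Matrix.sub_apply, Matrix.add_apply, Matrix.smul_apply,
        Matrix.vecMulVec_apply, smul_eq_mul, Pi.sub_apply]
      ring
    rw [hsplit, add_sub_right_comm, hSB, add_comm]
  have hz0' : (0:ℝ) ≤ z ⟨0, hp⟩ := hz0 _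
  have hcz : ∀ i : Fin k, |z (Fin.castLE hk i)| ≤ z ⟨0, hp⟩ := by
    intro i
    rw [abs_of_nonneg (hz0 _)]
    exact hzm ⟨0, hp⟩ (Fin.castLE hk i) (Fin.mk_le_of_le_val (Nat.zero_le _))
  have hyON := orthonormal_of_sums y hy
  have hxON := orthonormal_of_sums x hx
  have hvON := orthonormal_of_sums v hv
  have hxκON : Orthonormal ℝ (fun i : Fin k => toE (x (Fin.castLE hk i))) :=
    hxON.comp (Fin.castLE hk) hκinj
  have hbE1 : specNorm E1 ≤ z ⟨0, hp⟩ * ρ := by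
    refine specNorm_le_bound _ (by positivity) fun w => ?_
    rw [show E1 *ᵥ w = (∑ i : Fin k, z (Fin.castLE hk i) •
        Matrix.vecMulVec (y (Fin.castLE hk i) - v i) (x (Fin.castLE hk i))) *ᵥ w from rfl,
      toE_mulVec_sum]
    refine bound3 Finset.univ (fun i => z (Fin.castLE hk i))
      (fun i => toE (y (Fin.castLE hk i) - v i))
      (fun i => toE (x (Fin.castLE hk i))) hxκON hz0' hρ (fun i _ => hcz i) ?_ (toE w)
    refine le_trans (le_of_eq ?_) hyv
    exact Finset.sum_congr rfl fun i _ => by rw [euclNorm_eq]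
  have hbE2 : specNorm E2 ≤ z ⟨0, hp⟩ * ρ := by
    refine specNorm_le_bound _ (by positivity) fun w => ?_
    rw [show E2 *ᵥ w = (∑ i : Fin k, z (Fin.castLE hk i) •
        Matrix.vecMulVec (v i) (x (Fin.castLE hk i) - u i)) *ᵥ w from rfl,
      toE_mulVec_sum]
    refine bound2 Finset.univ (fun i => z (Fin.castLE hk i)) (fun i => toE (v i))
      (fun i => toE (x (Fin.castLE hk i) - u i)) hvON hz0' hρ (fun i _ => hcz i) ?_ (toE w)
    refine le_trans (le_of_eq ?_) hxu
    exact Finset.sum_congr rfl fun i _ => by rw [euclNorm_eq]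
  have hbT : specNorm T ≤ (if h : k < min m n then z ⟨k, h⟩ else 0) := by
    by_cases hkN : k < min m n
    · rw [dif_pos hkN]
      refine specNorm_le_bound _ (hz0 _) fun w => ?_
      rw [show T *ᵥ w = (∑ i ∈ Finset.univ.filter
          (fun i : Fin (min m n) => ¬ (i : ℕ) < k),
          z i • Matrix.vecMulVec (y i) (x i)) *ᵥ w from rfl, toE_mulVec_sum]
      refine bound1 _ z (fun i => toE (y i)) (fun i => toE (x i)) hyON hxON (hz0 _)
        ?_ (toE w)
      intro i hi
      rw [Finset.mem_filter] at hi
      rw [abs_of_nonneg (hz0 _)]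
      exact hzm ⟨k, hkN⟩ i (Fin.mk_le_of_le_val (Nat.le_of_not_lt hi.2))
    · rw [dif_neg hkN]
      have he : Finset.univ.filter (fun i : Fin (min m n) => ¬ (i : ℕ) < k) = ∅ := by
        refine Finset.filter_false_of_mem fun i _ => ?_
        push_neg
        exact lt_of_lt_of_le i.isLt (Nat.le_of_not_lt hkN)
      have : T = 0 := by
        show (∑ i ∈ Finset.univ.filter
          (fun i : Fin (min m n) => ¬ (i : ℕ) < k),
          z i • Matrix.vecMulVec (y i) (x i)) = 0
        rw [he, Finset.sum_empty]
      rw [this, specNorm_zero]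
  calc specNorm (A - B) = specNorm (T + (E1 + E2)) := by rw [hdecomp]
    _ ≤ specNorm T + specNorm (E1 + E2) := specNorm_add_le _ _
    _ ≤ specNorm T + (specNorm E1 + specNorm E2) :=
        add_le_add_right (specNorm_add_le _ _) _
    _ ≤ (if h : k < min m n then z ⟨k, h⟩ else 0) + (z ⟨0, hp⟩ * ρ + z ⟨0, hp⟩ * ρ) :=
        add_le_add hbT (add_le_add hbE1 hbE2)
    _ ≤ (if h : k < min m n then z ⟨k, h⟩ else 0) + z ⟨0, hp⟩ * (2 * ρ + ρ ^ 2) := by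
        have : 0 ≤ z ⟨0, hp⟩ * ρ ^ 2 := by positivity
        nlinarith
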